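/- Let N ≥ 3 and let p₀, …, p_{N−1} be pairwise distinct points in a real inner product space. Then the angular function satisfies F_N(p) ≤ N(N−1)(N−2)/4. -/

import Mathlib

open scoped RealInnerProductSpace

/-- The angular function `F_N`: the sum, over all triples consisting of a vertex index
`i` and an unordered pair `{j, k}` of indices distinct from `i` and from each other, of
the cosine of the angle at `p i` between `p j` and `p k`. -/
noncomputable def angularF {E : Type*} [NormedAddCommGroup E] [InnerProductSpace ℝ E]
    {N : ℕ} (p : Fin N → E) : ℝ :=
  ∑ i : Fin N, ∑ j ∈ Finset.univ.filter (· ≠ i),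
    ∑ k ∈ Finset.univ.filter (fun k => j < k ∧ k ≠ i),
      ⟪p j - p i, p k - p i⟫ / (‖p j - p i‖ * ‖p k - p i‖)

/-- In any triangle with distinct vertices, the sum of the cosines of the three angles
is at most `3/2`. -/
lemma triangle_cos_sum {E : Type*} [NormedAddCommGroup E] [InnerProductSpace ℝ E]
    (A B C : E) (hAB : A ≠ B) (hAC : A ≠ C) (hBC : B ≠ C) :
    ⟪B - A, C - A⟫ / (‖B - A‖ * ‖C - A‖)
      + ⟪A - B, C - B⟫ / (‖A - B‖ * ‖C - B‖)
      + ⟪A - C, B - C⟫ / (‖A - C‖ * ‖B - C‖) ≤ 3 / 2 := by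
  have hx : (0:ℝ) < ‖B - A‖ := by rw [norm_sub_pos_iff]; exact hAB.symm
  have hy : (0:ℝ) < ‖C - A‖ := by rw [norm_sub_pos_iff]; exact hAC.symm
  have hz : (0:ℝ) < ‖C - B‖ := by rw [norm_sub_pos_iff]; exact hBC.symm
  set x := ‖B - A‖ with hxs
  set y := ‖C - A‖ with hys
  set z := ‖C - B‖ with hzs
  set t := ⟪B - A, C - A⟫ with hts
  have e1 : ‖A - B‖ = x := norm_sub_rev A B
  have e2 : ‖B - C‖ = z := norm_sub_rev B C
  have h1 : ⟪A - B, C - B⟫ = x^2 - t := by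
    have hab : A - B = -(B - A) := by abel
    have hcb : C - B = (C - A) - (B - A) := by abel
    rw [hab, hcb, inner_neg_left, inner_sub_right, real_inner_self_eq_norm_sq, ← hts]
    ring
  have h2 : ⟪A - C, B - C⟫ = y^2 - t := by
    have hac : A - C = -(C - A) := by abel
    have hbc : B - C = (B - A) - (C - A) := by abel
    rw [hac, hbc, inner_neg_left, inner_sub_right, real_inner_self_eq_norm_sq,
      real_inner_comm (B - A) (C - A), ← hts, ← hys]
    ring
  have hz2 : z^2 = x^2 + y^2 - 2*t := by
    have hcb : C - B = (C - A) - (B - A) := by abel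
    rw [hzs, hcb, norm_sub_sq_real, real_inner_comm (B - A) (C - A), ← hts]
    ring
  -- triangle inequalities
  have t1 : z ≤ y + x := by
    have h := norm_sub_le (C - A) (B - A)
    have he : (C - A) - (B - A) = C - B := by abel
    rw [he] at h; linarith
  have t2 : y ≤ z + x := by
    have h := norm_add_le (C - B) (B - A)
    have he : (C - B) + (B - A) = C - A := by abel
    rw [he] at h; linarith
  have t3 : x ≤ z + y := by
    have h := norm_sub_le (C - A) (C - B)
    have he : (C - A) - (C - B) = B - A := by abel
    rw [he] at h; linarith
  have e3 : ‖A - C‖ = y := norm_sub_rev A C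
  rw [h1, h2, e1, e2, e3]
  have key : t * z + (x^2 - t) * y + (y^2 - t) * x ≤ 3/2 * (x * y * z) := by
    have ht : t = (x^2 + y^2 - z^2) / 2 := by linarith
    rw [ht]
    nlinarith [mul_nonneg (mul_nonneg (sub_nonneg.2 t1) (sub_nonneg.2 t2)) (sub_nonneg.2 t3),
      mul_pos hx hy, mul_pos hy hz, mul_pos hx hz, sq_nonneg (x - y), sq_nonneg (y - z),
      sq_nonneg (x - z), mul_pos (mul_pos hx hy) hz]
  have heq : t / (x * y) + (x^2 - t) / (x * z) + (y^2 - t) / (y * z)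
      = (t * z + (x^2 - t) * y + (y^2 - t) * x) / (x * y * z) := by
    field_simp
  rw [heq]
  rw [div_le_iff₀ (by positivity)]
  linarith

/-- Regroup the triple sum defining `angularF` as a sum over strictly increasing
triples of indices. -/
lemma regroup {N : ℕ} (f : Fin N → Fin N → Fin N → ℝ) :
    (∑ i : Fin N, ∑ j ∈ Finset.univ.filter (· ≠ i),
      ∑ k ∈ Finset.univ.filter (fun k => j < k ∧ k ≠ i), f i j k)
    = ∑ t ∈ Finset.univ.filter
        (fun t : Fin N × Fin N × Fin N => t.1 < t.2.1 ∧ t.2.1 < t.2.2),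
        (f t.1 t.2.1 t.2.2 + f t.2.1 t.1 t.2.2 + f t.2.2 t.1 t.2.1) := by
  classical
  set T : Finset (Fin N × Fin N × Fin N) :=
    Finset.univ.filter (fun t => t.2.1 ≠ t.1 ∧ t.2.1 < t.2.2 ∧ t.2.2 ≠ t.1) with hT
  set S : Finset (Fin N × Fin N × Fin N) :=
    Finset.univ.filter (fun t : Fin N × Fin N × Fin N => t.1 < t.2.1 ∧ t.2.1 < t.2.2) with hS
  have hA : (∑ i : Fin N, ∑ j ∈ Finset.univ.filter (· ≠ i),
      ∑ k ∈ Finset.univ.filter (fun k => j < k ∧ k ≠ i), f i j k)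
      = ∑ t ∈ T, f t.1 t.2.1 t.2.2 := by
    rw [hT]
    simp only [Finset.sum_filter, Fintype.sum_prod_type]
    refine Finset.sum_congr rfl fun i _ => Finset.sum_congr rfl fun j _ => ?_
    by_cases h : j = i
    · simp [h]
    · simp only [h, if_true, ne_eq, not_false_eq_true]
      refine Finset.sum_congr rfl fun k _ => ?_
      split_ifs <;> tauto
  rw [hA]
  rw [← Finset.sum_filter_add_sum_filter_not T (fun t => t.1 < t.2.1)]
  rw [← Finset.sum_filter_add_sum_filter_not (T.filter (fun t => ¬ t.1 < t.2.1))
      (fun t => t.1 < t.2.2)]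
  rw [Finset.sum_add_distrib, Finset.sum_add_distrib]
  have e1 : ∑ t ∈ T.filter (fun t => t.1 < t.2.1), f t.1 t.2.1 t.2.2
      = ∑ t ∈ S, f t.1 t.2.1 t.2.2 := by
    congr 1
    ext t
    simp only [hT, hS, Finset.mem_filter, Finset.mem_univ, true_and]
    constructor
    · rintro ⟨⟨h1, h2, h3⟩, h4⟩; exact ⟨h4, h2⟩
    · rintro ⟨h1, h2⟩; exact ⟨⟨h1.ne', h2, (h1.trans h2).ne'⟩, h1⟩
  have e2 : ∑ t ∈ (T.filter (fun t => ¬ t.1 < t.2.1)).filter (fun t => t.1 < t.2.2),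
        f t.1 t.2.1 t.2.2
      = ∑ t ∈ S, f t.2.1 t.1 t.2.2 := by
    refine Finset.sum_nbij' (fun t => (t.2.1, t.1, t.2.2)) (fun s => (s.2.1, s.1, s.2.2))
      ?_ ?_ ?_ ?_ ?_
    · rintro ⟨i, j, k⟩ ht
      simp only [hT, Finset.mem_filter, Finset.mem_univ, true_and] at ht
      obtain ⟨⟨⟨h1, h2, h3⟩, h4⟩, h5⟩ := ht
      simp only [hS, Finset.mem_filter, Finset.mem_univ, true_and]
      exact ⟨lt_of_le_of_ne (not_lt.mp h4) h1, h5⟩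
    · rintro ⟨a, b, c⟩ hs
      simp only [hS, Finset.mem_filter, Finset.mem_univ, true_and] at hs
      obtain ⟨h1, h2⟩ := hs
      simp only [hT, Finset.mem_filter, Finset.mem_univ, true_and]
      exact ⟨⟨⟨h1.ne, (h1.trans h2), h2.ne'⟩, not_lt.mpr h1.le⟩, h2⟩
    · rintro ⟨i, j, k⟩ _; rfl
    · rintro ⟨a, b, c⟩ _; rfl
    · rintro ⟨i, j, k⟩ _; rfl
  have e3 : ∑ t ∈ (T.filter (fun t => ¬ t.1 < t.2.1)).filter (fun t => ¬ t.1 < t.2.2),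
        f t.1 t.2.1 t.2.2
      = ∑ t ∈ S, f t.2.2 t.1 t.2.1 := by
    refine Finset.sum_nbij' (fun t => (t.2.1, t.2.2, t.1)) (fun s => (s.2.2, s.1, s.2.1))
      ?_ ?_ ?_ ?_ ?_
    · rintro ⟨i, j, k⟩ ht
      simp only [hT, Finset.mem_filter, Finset.mem_univ, true_and] at ht
      obtain ⟨⟨⟨h1, h2, h3⟩, h4⟩, h5⟩ := ht
      simp only [hS, Finset.mem_filter, Finset.mem_univ, true_and]
      exact ⟨h2, lt_of_le_of_ne (not_lt.mp h5) h3⟩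
    · rintro ⟨a, b, c⟩ hs
      simp only [hS, Finset.mem_filter, Finset.mem_univ, true_and] at hs
      obtain ⟨h1, h2⟩ := hs
      simp only [hT, Finset.mem_filter, Finset.mem_univ, true_and]
      exact ⟨⟨⟨(h1.trans h2).ne, h1, h2.ne⟩, not_lt.mpr (h1.trans h2).le⟩, not_lt.mpr h2.le⟩
    · rintro ⟨i, j, k⟩ _; rfl
    · rintro ⟨a, b, c⟩ _; rfl
    · rintro ⟨i, j, k⟩ _; rfl
  rw [e1, e2, e3]
  ring

/-- The number of strictly increasing triples in `Fin N` is at most `N(N-1)(N-2)/6`. -/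
lemma card_sorted {N : ℕ} (hN : 3 ≤ N) :
    ((Finset.univ.filter
        (fun t : Fin N × Fin N × Fin N => t.1 < t.2.1 ∧ t.2.1 < t.2.2)).card : ℝ) * 6
      ≤ (N : ℝ) * ((N : ℝ) - 1) * ((N : ℝ) - 2) := by
  classical
  have hcard : (Finset.univ.filter
      (fun t : Fin N × Fin N × Fin N => t.1 < t.2.1 ∧ t.2.1 < t.2.2)).card
      ≤ N.choose 3 := by
    have h := Finset.card_le_card_of_injOn
      (f := fun t : Fin N × Fin N × Fin N => ({t.1, t.2.1, t.2.2} : Finset (Fin N)))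
      (s := Finset.univ.filter
        (fun t : Fin N × Fin N × Fin N => t.1 < t.2.1 ∧ t.2.1 < t.2.2))
      (t := (Finset.univ : Finset (Fin N)).powersetCard 3)
      ?_ ?_
    · rwa [Finset.card_powersetCard, Finset.card_univ, Fintype.card_fin] at h
    · rintro ⟨a, b, c⟩ ht
      simp only [Finset.mem_coe, Finset.mem_filter, Finset.mem_univ, true_and] at ht
      obtain ⟨h1, h2⟩ := ht
      rw [Finset.mem_coe, Finset.mem_powersetCard]
      refine ⟨Finset.subset_univ _, ?_⟩
      rw [Finset.card_insert_of_notMem (by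
          simp only [Finset.mem_insert, Finset.mem_singleton]
          push_neg
          exact ⟨h1.ne, (h1.trans h2).ne⟩),
        Finset.card_insert_of_notMem (by simp [h2.ne]),
        Finset.card_singleton]
    · rintro ⟨a, b, c⟩ ht ⟨a', b', c'⟩ ht' h
      simp only [Finset.coe_filter, Finset.mem_univ, true_and, Set.mem_setOf_eq] at ht ht'
      obtain ⟨h1, h2⟩ := ht
      obtain ⟨h1', h2'⟩ := ht'
      have ext := Finset.ext_iff.mp h
      have m1 := (ext a).mp (by simp)
      have m2 := (ext b).mp (by simp)
      have m3 := (ext c).mp (by simp)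
      have m4 := (ext a').mpr (by simp)
      have m5 := (ext b').mpr (by simp)
      have m6 := (ext c').mpr (by simp)
      simp only [Finset.mem_insert, Finset.mem_singleton] at m1 m2 m3 m4 m5 m6
      simp only [Prod.mk.injEq, Fin.ext_iff, Fin.lt_def] at *
      omega
  have h6 : N.choose 3 * 6 = N * (N - 1) * (N - 2) := by
    have h := Nat.descFactorial_eq_factorial_mul_choose N 3
    have hd : N.descFactorial 3 = (N - 2) * ((N - 1) * (N * 1)) := by
      simp [Nat.descFactorial]
    rw [hd, show Nat.factorial 3 = 6 from rfl] at h
    ring_nf at h ⊢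
    omega
  have hle : (Finset.univ.filter
      (fun t : Fin N × Fin N × Fin N => t.1 < t.2.1 ∧ t.2.1 < t.2.2)).card * 6
      ≤ N * (N - 1) * (N - 2) := by
    calc _ ≤ N.choose 3 * 6 := by omega
      _ = _ := h6
  have := (Nat.cast_le (α := ℝ)).mpr hle
  push_cast [Nat.cast_sub (by omega : 1 ≤ N), Nat.cast_sub (by omega : 2 ≤ N)] at this
  linarith

/-- For `N ≥ 3` pairwise distinct points of a real inner product
space, `F_N(p) ≤ N(N−1)(N−2)/4`. -/
theorem angularF_upper_bound {E : Type*} [NormedAddCommGroup E] [InnerProductSpace ℝ E]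
    {N : ℕ} (hN : 3 ≤ N) (p : Fin N → E)
    (hp : ∀ i j : Fin N, i ≠ j → p i ≠ p j) :
    angularF p ≤ (N : ℝ) * ((N : ℝ) - 1) * ((N : ℝ) - 2) / 4 := by
  classical
  unfold angularF
  rw [regroup]
  set S := Finset.univ.filter
    (fun t : Fin N × Fin N × Fin N => t.1 < t.2.1 ∧ t.2.1 < t.2.2) with hS
  have hbound : ∀ t ∈ S,
      ⟪p t.2.1 - p t.1, p t.2.2 - p t.1⟫ / (‖p t.2.1 - p t.1‖ * ‖p t.2.2 - p t.1‖)
      + ⟪p t.1 - p t.2.1, p t.2.2 - p t.2.1⟫ / (‖p t.1 - p t.2.1‖ * ‖p t.2.2 - p t.2.1‖)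
      + ⟪p t.1 - p t.2.2, p t.2.1 - p t.2.2⟫ / (‖p t.1 - p t.2.2‖ * ‖p t.2.1 - p t.2.2‖)
      ≤ 3 / 2 := by
    rintro ⟨a, b, c⟩ ht
    simp only [hS, Finset.mem_filter, Finset.mem_univ, true_and] at ht
    obtain ⟨h1, h2⟩ := ht
    exact triangle_cos_sum (p a) (p b) (p c) (hp a b h1.ne) (hp a c (h1.trans h2).ne)
      (hp b c h2.ne)
  calc (∑ t ∈ S,
      (⟪p t.2.1 - p t.1, p t.2.2 - p t.1⟫ / (‖p t.2.1 - p t.1‖ * ‖p t.2.2 - p t.1‖)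
      + ⟪p t.1 - p t.2.1, p t.2.2 - p t.2.1⟫ / (‖p t.1 - p t.2.1‖ * ‖p t.2.2 - p t.2.1‖)
      + ⟪p t.1 - p t.2.2, p t.2.1 - p t.2.2⟫ / (‖p t.1 - p t.2.2‖ * ‖p t.2.1 - p t.2.2‖)))
      ≤ ∑ _t ∈ S, (3/2 : ℝ) := Finset.sum_le_sum hbound
    _ = (S.card : ℝ) * (3/2) := by rw [Finset.sum_const, nsmul_eq_mul]
    _ ≤ (N : ℝ) * ((N : ℝ) - 1) * ((N : ℝ) - 2) / 4 := by
        have := card_sorted (N := N) hN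
        rw [← hS] at this
        linarith
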